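/- Let 0 < λ < 1/2 and P ∈ ℝ. Then there is no local solution (ψ, (a, b)) of the homogeneous Euler ODE with parameters (λ, P) such that b − a ≤ 2π and ∫_a^b ψ′(θ)² dθ < ∞. In other words, for 0 < λ < 1/2 every homogeneous solution with locally finite energy is non-vanishing (elliptic). -/

import Mathlib

open Real Set Filter Topology

private lemma deriv_const_aux {f g : ℝ → ℝ} {a b : ℝ}
    (hf : ∀ x ∈ Set.Ioo a b, HasDerivAt f (g x) x)
    (hg : ∀ x ∈ Set.Ioo a b, g x = 0) :
    ∀ s ∈ Set.Ioo a b, ∀ t ∈ Set.Ioo a b, f s = f t := by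
  have key : ∀ s ∈ Set.Ioo a b, ∀ t ∈ Set.Ioo a b, s < t → f s = f t := by
    intro s hs t ht hst
    have hsub : Set.Icc s t ⊆ Set.Ioo a b := Set.Icc_subset_Ioo hs.1 ht.2
    have hco : ContinuousOn f (Set.Icc s t) := fun x hx =>
      (hf x (hsub hx)).continuousAt.continuousWithinAt
    obtain ⟨c, hc, hsl⟩ := exists_hasDerivAt_eq_slope f g hst hco
      (fun x hx => hf x (hsub (Set.Ioo_subset_Icc_self hx)))
    have h0 := hg c (hsub (Set.Ioo_subset_Icc_self hc))
    rw [h0] at hsl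
    have hne : t - s ≠ 0 := sub_ne_zero.mpr hst.ne'
    field_simp at hsl
    linarith
  intro s hs t ht
  rcases lt_trichotomy s t with h | h | h
  · exact key s hs t ht h
  · rw [h]
  · exact (key t ht s hs h).symm

private lemma deriv_linear_aux {f : ℝ → ℝ} {k a b : ℝ}
    (hf : ∀ x ∈ Set.Ioo a b, HasDerivAt f k x) :
    ∀ s ∈ Set.Ioo a b, ∀ t ∈ Set.Ioo a b, f t - f s = k * (t - s) := by
  have h := deriv_const_aux (f := fun x => f x - k * x) (g := fun _ => (0:ℝ)) (a := a) (b := b)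
    (fun x hx => ((hf x hx).sub ((hasDerivAt_id x).const_mul k)).congr_deriv (by simp))
    (fun x _ => rfl)
  intro s hs t ht
  have h2 := h s hs t ht
  linarith

set_option maxHeartbeats 4000000 in
/-- For `0 < λ < 1/2` there is no local solution `(ψ, (a,b))` of the homogeneous
Euler ODE with `b - a ≤ 2π` and finite energy `∫_a^b ψ'² < ∞`: every finite-energy homogeneous
solution is non-vanishing (elliptic). -/
theorem no_vanishing_solutions_small_lambda
    (lam P : ℝ) (hlam0 : 0 < lam) (hlam : lam < 1/2)
    (a b : ℝ) (hab : a < b) (hspan : b - a ≤ 2 * Real.pi)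
    (ψ ψ' ψ'' : ℝ → ℝ)
    (hcont : ContinuousOn ψ (Set.Icc a b))
    (ha : ψ a = 0) (hb : ψ b = 0)
    (hpos : ∀ θ ∈ Set.Ioo a b, 0 < ψ θ)
    (hd1 : ∀ θ ∈ Set.Ioo a b, HasDerivAt ψ (ψ' θ) θ)
    (hd2 : ∀ θ ∈ Set.Ioo a b, HasDerivAt ψ' (ψ'' θ) θ)
    (hode : ∀ θ ∈ Set.Ioo a b, 2 * (lam - 1) * P =
      -(lam - 1) * (ψ' θ) ^ 2 + lam ^ 2 * (ψ θ) ^ 2 + lam * (ψ'' θ) * (ψ θ))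
    (hH1 : IntervalIntegrable (fun θ => (ψ' θ) ^ 2) MeasureTheory.volume a b) :
    False := by
  have hlam1 : lam < 1 := by linarith
  have hl0 : lam ≠ 0 := ne_of_gt hlam0
  have h1l : (1:ℝ) - lam ≠ 0 := ne_of_gt (by linarith)
  have hl2 : (0:ℝ) < lam^2 := by positivity
  obtain ⟨q, hq2, hlq⟩ : ∃ q : ℝ, 2 < q ∧ lam * q = 2 - 2*lam := by
    refine ⟨2/lam - 2, ?_, ?_⟩
    · have h4 : (4:ℝ) < 2/lam := by rw [lt_div_iff₀ hlam0]; nlinarith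
      linarith
    · field_simp
  have hqpos : (0:ℝ) < q := by linarith
  obtain ⟨D, hD⟩ : ∃ D : ℝ, lam^2*(1-lam)*D = 2*(lam-1)*P :=
    ⟨2*(lam-1)*P/(lam^2*(1-lam)), by field_simp⟩
  -- the conserved quantity F = ψ^q * (ψ'^2 + λ²ψ² - λ²D)
  have hF' : ∀ θ ∈ Set.Ioo a b, HasDerivAt
      (fun x => ψ x ^ q * (ψ' x ^ 2 + lam^2 * ψ x ^ 2 - lam^2 * D)) 0 θ := by
    intro θ hθ
    have hψθ := hpos θ hθ
    have h1 : HasDerivAt (fun x => ψ x ^ q) (ψ' θ * q * ψ θ ^ (q-1)) θ :=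
      (hd1 θ hθ).rpow_const (Or.inl hψθ.ne')
    have h2a : HasDerivAt (fun x => ψ' x ^ 2) (2 * ψ' θ * ψ'' θ) θ := by
      have := (hd2 θ hθ).pow 2
      exact this.congr_deriv (by simp only [Nat.cast_ofNat, show (2:ℕ) - 1 = 1 from rfl, pow_one])
    have h2b : HasDerivAt (fun x => lam^2 * ψ x ^2) (lam^2 * (2 * ψ θ * ψ' θ)) θ := by
      have := ((hd1 θ hθ).pow 2).const_mul (lam^2)
      simpa [mul_comm, mul_assoc] using this
    have h2 : HasDerivAt (fun x => ψ' x ^2 + lam^2 * ψ x ^2 - lam^2*D)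
        (2*ψ' θ*ψ'' θ + lam^2*(2*ψ θ*ψ' θ)) θ := (h2a.add h2b).sub_const _
    have h3 := h1.mul h2
    refine h3.congr_deriv ?_
    have hode' : lam * (ψ'' θ * ψ θ) = 2*(lam-1)*P + (lam-1)*ψ' θ^2 - lam^2 * ψ θ^2 := by
      have h := hode θ hθ; nlinarith [h]
    have key : ψ' θ * q * (ψ' θ^2 + lam^2*ψ θ^2 - lam^2*D)
        + ψ θ * (2*ψ' θ*ψ'' θ + lam^2*(2*ψ θ*ψ' θ)) = 0 := by
      have hmul : lam * (ψ' θ * q * (ψ' θ^2 + lam^2*ψ θ^2 - lam^2*D)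
          + ψ θ * (2*ψ' θ*ψ'' θ + lam^2*(2*ψ θ*ψ' θ))) = 0 := by
        linear_combination (ψ' θ * (ψ' θ^2 + lam^2*ψ θ^2 - lam^2*D)) * hlq
          + (2*ψ' θ) * hode' + (-2*ψ' θ) * hD
      exact (mul_eq_zero.mp hmul).resolve_left hl0
    have hsplit : ψ θ ^ (q-1) * ψ θ = ψ θ ^ q := by
      rw [Real.rpow_sub hψθ, Real.rpow_one]; field_simp
    have hfact : ψ' θ * q * ψ θ ^ (q-1) * (ψ' θ^2 + lam^2*ψ θ^2 - lam^2*D)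
        + ψ θ ^ q * (2*ψ' θ*ψ'' θ + lam^2*(2*ψ θ*ψ' θ))
        = ψ θ ^ (q-1) * (ψ' θ * q * (ψ' θ^2 + lam^2*ψ θ^2 - lam^2*D)
          + ψ θ * (2*ψ' θ*ψ'' θ + lam^2*(2*ψ θ*ψ' θ))) := by
      rw [← hsplit]; ring
    rw [hfact, key, mul_zero]
  -- F is constant
  set θ₀ : ℝ := (a+b)/2 with hθ₀def
  have hθ₀ : θ₀ ∈ Set.Ioo a b := by constructor <;> (rw [hθ₀def]; linarith)
  set κ : ℝ := ψ θ₀ ^ q * (ψ' θ₀^2 + lam^2*ψ θ₀^2 - lam^2*D) with hκdef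
  have hFc : ∀ s ∈ Set.Ioo a b, ψ s ^ q * (ψ' s ^2 + lam^2*ψ s^2 - lam^2*D) = κ :=
    fun s hs => deriv_const_aux hF' (fun _ _ => rfl) s hs θ₀ hθ₀
  -- limits of ψ at the endpoints
  have hTψa : Tendsto ψ (𝓝[>] a) (𝓝 0) := by
    have h0 : ContinuousWithinAt ψ (Set.Icc a b) a := hcont a (Set.left_mem_Icc.2 hab.le)
    have h1 : Tendsto ψ (𝓝[Set.Icc a b] a) (𝓝 0) := by rw [← ha]; exact h0
    have h2 := h1.mono_left (nhdsWithin_mono a Set.Ioc_subset_Icc_self)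
    rwa [nhdsWithin_Ioc_eq_nhdsGT hab] at h2
  have hTψb : Tendsto ψ (𝓝[<] b) (𝓝 0) := by
    have h0 : ContinuousWithinAt ψ (Set.Icc a b) b := hcont b (Set.right_mem_Icc.2 hab.le)
    have h1 : Tendsto ψ (𝓝[Set.Icc a b] b) (𝓝 0) := by rw [← hb]; exact h0
    have h2 := h1.mono_left (nhdsWithin_mono b Set.Ico_subset_Icc_self)
    rwa [nhdsWithin_Ico_eq_nhdsLT hab] at h2
  have hrpow0 : ∀ (r : ℝ), 0 < r → ∀ (l : Filter ℝ), Tendsto ψ l (𝓝 0) →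
      Tendsto (fun θ => ψ θ ^ r) l (𝓝 0) := by
    intro r hr l hl
    have hc : ContinuousAt (fun x : ℝ => x ^ r) 0 :=
      Real.continuousAt_rpow_const 0 r (Or.inr hr.le)
    have := hc.tendsto.comp hl
    simpa [Function.comp_def, Real.zero_rpow hr.ne'] using this
  have hmemIoo : Set.Ioo a b ∈ 𝓝[>] a := Ioo_mem_nhdsGT hab
  -- the limit of ψ^q ψ'^2 at a is κ
  have hTB : Tendsto (fun θ => ψ θ ^ q * ψ' θ ^ 2) (𝓝[>] a) (𝓝 κ) := by
    have heq : ∀ᶠ θ in 𝓝[>] a, (fun θ => κ - lam^2 * (ψ θ ^ q * ψ θ ^2) + lam^2*D*ψ θ ^ q) θ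
        = (fun θ => ψ θ ^ q * ψ' θ ^ 2) θ := by
      filter_upwards [hmemIoo] with θ hθ
      have h := hFc θ hθ
      beta_reduce
      linear_combination -h
    have t1 := hrpow0 q hqpos _ hTψa
    have t2 : Tendsto (fun θ => ψ θ^2) (𝓝[>] a) (𝓝 0) := by
      have := hTψa.pow 2
      simpa using this
    have hlim : Tendsto (fun θ => κ - lam^2 * (ψ θ ^ q * ψ θ ^2) + lam^2*D*ψ θ ^ q)
        (𝓝[>] a) (𝓝 (κ - lam^2 * (0*0) + lam^2*D*0)) :=
      (tendsto_const_nhds.sub ((t1.mul t2).const_mul (lam^2))).add (t1.const_mul (lam^2*D))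
    have hκeq : κ - lam^2 * ((0:ℝ)*0) + lam^2*D*0 = κ := by ring
    rw [hκeq] at hlim
    exact hlim.congr' heq
  have hκnn : 0 ≤ κ := by
    refine ge_of_tendsto hTB ?_
    filter_upwards [hmemIoo] with θ hθ
    have := (hpos θ hθ).le
    positivity
  rcases eq_or_lt_of_le hκnn with hκ0 | hκpos
  · -- κ = 0 : the explicit pendulum case, period is π/λ > 2π
    have hA0 : ∀ θ ∈ Set.Ioo a b, ψ' θ^2 + lam^2*ψ θ^2 = lam^2*D := by
      intro θ hθ
      have h := hFc θ hθ
      rw [← hκ0] at h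
      have hx : ψ θ ^ q ≠ 0 := (Real.rpow_pos_of_pos (hpos θ hθ) q).ne'
      have h2 := (mul_eq_zero.mp h).resolve_left hx
      linarith
    have hψθ₀ := hpos θ₀ hθ₀
    have hDpos : 0 < D := by
      have hstep : 0 < lam^2 * D := by
        linarith [hA0 θ₀ hθ₀, sq_nonneg (ψ' θ₀), mul_pos hl2 (pow_pos hψθ₀ 2)]
      by_contra hD'
      push_neg at hD'
      nlinarith [hstep, mul_nonneg hl2.le (neg_nonneg.2 hD')]
    set R : ℝ := Real.sqrt D with hRdef
    have hR : 0 < R := Real.sqrt_pos.mpr hDpos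
    have hR2 : R^2 = D := Real.sq_sqrt hDpos.le
    have hRD : lam^2*R^2 = lam^2*D := by rw [hR2]
    have hsq_eq : ∀ x, 0 < ψ x → ψ' x = 0 → (ψ' x^2 + lam^2*ψ x^2 = lam^2*D) → ψ x = R := by
      intro x hx h0 hAx
      rw [h0] at hAx
      have hsq : ψ x^2 = R^2 :=
        mul_left_cancel₀ hl2.ne' (by linarith : lam^2 * ψ x^2 = lam^2 * R^2)
      rw [← Real.sqrt_sq hx.le, hsq, Real.sqrt_sq hR.le]
    have hψle : ∀ θ ∈ Set.Ioo a b, ψ θ ≤ R := by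
      intro θ hθ
      by_contra hgt
      push_neg at hgt
      have h1 : R^2 < ψ θ^2 := by
        have := pow_lt_pow_left₀ hgt hR.le (two_ne_zero)
        exact this
      have h2 : lam^2*R^2 < lam^2*ψ θ^2 := mul_lt_mul_of_pos_left h1 hl2
      linarith [hA0 θ hθ, sq_nonneg (ψ' θ), hRD]
    -- the maximum point
    obtain ⟨m, hmIcc, hmax⟩ := isCompact_Icc.exists_isMaxOn (Set.nonempty_Icc.2 hab.le) hcont
    have hmax' : ∀ x ∈ Set.Icc a b, ψ x ≤ ψ m := fun x hx => hmax hx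
    have hψm : 0 < ψ m := lt_of_lt_of_le hψθ₀ (hmax' θ₀ (Set.Ioo_subset_Icc_self hθ₀))
    have hma : a < m := lt_of_le_of_ne hmIcc.1 (fun h => by rw [← h] at hψm; linarith)
    have hmb : m < b := lt_of_le_of_ne hmIcc.2 (fun h => by rw [h] at hψm; linarith)
    have hm : m ∈ Set.Ioo a b := ⟨hma, hmb⟩
    have hψ'm : ψ' m = 0 := by
      have hloc : IsLocalMax ψ m := hmax.isLocalMax (Icc_mem_nhds hma hmb)
      exact hloc.hasDerivAt_eq_zero (hd1 m hm)
    have hψmR : ψ m = R := hsq_eq m hψm hψ'm (hA0 m hm)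
    -- two distinct points with value R are impossible
    have key2 : ∀ s1 ∈ Set.Ioo a b, ∀ s2 ∈ Set.Ioo a b, s1 < s2 → ψ s1 = R → ψ s2 = R → False := by
      intro s1 hs1 s2 hs2 h12 hR1 hR2'
      have hsub : Set.Icc s1 s2 ⊆ Set.Ioo a b := Set.Icc_subset_Ioo hs1.1 hs2.2
      obtain ⟨ξ, hξmem, hξmin⟩ := isCompact_Icc.exists_isMinOn (Set.nonempty_Icc.2 h12.le)
        (hcont.mono (hsub.trans Set.Ioo_subset_Icc_self))
      have hξmin' : ∀ x ∈ Set.Icc s1 s2, ψ ξ ≤ ψ x := fun x hx => hξmin hx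
      rcases lt_or_eq_of_le (hψle ξ (hsub hξmem)) with hlt | heq
      · -- interior strict minimum below R : impossible
        have hξ1 : s1 < ξ := lt_of_le_of_ne hξmem.1 (fun h => by rw [← h] at hlt; rw [hR1] at hlt; linarith)
        have hξ2 : ξ < s2 := lt_of_le_of_ne hξmem.2 (fun h => by rw [h] at hlt; rw [hR2'] at hlt; linarith)
        have hloc : IsLocalMin ψ ξ := hξmin.isLocalMin (Icc_mem_nhds hξ1 hξ2)
        have h0 : ψ' ξ = 0 := hloc.hasDerivAt_eq_zero (hd1 ξ (hsub hξmem))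
        have : ψ ξ = R := hsq_eq ξ (hpos ξ (hsub hξmem)) h0 (hA0 ξ (hsub hξmem))
        rw [this] at hlt; linarith
      · -- ψ ≡ R on [s1,s2] : contradiction with the ODE
        have hconst : ∀ x ∈ Set.Icc s1 s2, ψ x = R := by
          intro x hx
          have h1 := hξmin' x hx
          have h2 := hψle x (hsub hx)
          rw [← heq] at h2 ⊢
          linarith
        set θc := (s1+s2)/2 with hθcdef
        have hθc : θc ∈ Set.Ioo s1 s2 := by constructor <;> (rw [hθcdef]; linarith)
        have hmem : Set.Ioo s1 s2 ∈ 𝓝 θc := (isOpen_Ioo).mem_nhds hθc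
        have hθcab : θc ∈ Set.Ioo a b := hsub (Set.Ioo_subset_Icc_self hθc)
        have hψ'c : ∀ x ∈ Set.Ioo s1 s2, ψ' x = 0 := by
          intro x hx
          have hxab : x ∈ Set.Ioo a b := hsub (Set.Ioo_subset_Icc_self hx)
          have hEq : ψ =ᶠ[𝓝 x] (fun _ => R) := by
            filter_upwards [(isOpen_Ioo).mem_nhds hx] with y hy
            exact hconst y (Set.Ioo_subset_Icc_self hy)
          have h1 : HasDerivAt (fun _ : ℝ => R) (ψ' x) x := (hd1 x hxab).congr_of_eventuallyEq hEq.symm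
          have h2 : HasDerivAt (fun _ : ℝ => R) 0 x := hasDerivAt_const x R
          exact h1.unique h2
        have hψ''c : ψ'' θc = 0 := by
          have hEq : ψ' =ᶠ[𝓝 θc] (fun _ => (0:ℝ)) := by
            filter_upwards [hmem] with y hy
            exact hψ'c y hy
          have h1 : HasDerivAt (fun _ : ℝ => (0:ℝ)) (ψ'' θc) θc :=
            (hd2 θc hθcab).congr_of_eventuallyEq hEq.symm
          exact h1.unique (hasDerivAt_const θc 0)
        have hodeθc := hode θc hθcab
        rw [hψ''c, hψ'c θc hθc, hconst θc (Set.Ioo_subset_Icc_self hθc)] at hodeθc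
        -- 2(λ-1)P = λ²R², and λ²(1-λ)D = 2(λ-1)P, R² = D  ⟹  λ³D = 0
        have : lam^3 * D = 0 := by nlinarith [hodeθc, hD, hR2]
        have hD0 : D = 0 := by
          have h3 : lam^3 ≠ 0 := pow_ne_zero 3 hl0
          exact (mul_eq_zero.mp this).resolve_left h3
        linarith
    have huniq : ∀ t ∈ Set.Ioo a b, ψ t = R → t = m := by
      intro t ht htR
      rcases lt_trichotomy t m with h | h | h
      · exact absurd (key2 t ht m hm h htR hψmR) (fun hF => hF.elim)
      · exact h
      · exact absurd (key2 m hm t ht h hψmR htR) (fun hF => hF.elim)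
    have hψ'ne : ∀ t ∈ Set.Ioo a b, t ≠ m → ψ' t ≠ 0 := by
      intro t ht htm h0
      exact htm (huniq t ht (hsq_eq t (hpos t ht) h0 (hA0 t ht)))
    -- ψ' > 0 on (a,m)
    have hsgn1 : ∀ t ∈ Set.Ioo a m, 0 < ψ' t := by
      intro t ht
      have htab : t ∈ Set.Ioo a b := ⟨ht.1, ht.2.trans hmb⟩
      rcases lt_or_ge 0 (ψ' t) with h | h
      · exact h
      exfalso
      have hψ't : ψ' t < 0 := lt_of_le_of_ne h (hψ'ne t htab (ne_of_lt ht.2))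
      have hneg : ∀ s ∈ Set.Ioo a t, ψ' s < 0 := by
        intro s hs
        rcases lt_or_ge (ψ' s) 0 with h' | h'
        · exact h'
        exfalso
        have hsab : s ∈ Set.Ioo a b := ⟨hs.1, (hs.2.trans ht.2).trans hmb⟩
        have hψ's : 0 < ψ' s := lt_of_le_of_ne h' (Ne.symm (hψ'ne s hsab (ne_of_lt (hs.2.trans ht.2))))
        have hsubI : Set.Icc s t ⊆ Set.Ioo a b := Set.Icc_subset_Ioo hs.1 htab.2
        have hcs : ContinuousOn ψ' (Set.Icc s t) := fun x hx =>
          (hd2 x (hsubI hx)).continuousAt.continuousWithinAt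
        have h0mem : (0:ℝ) ∈ Set.Icc (ψ' t) (ψ' s) := ⟨hψ't.le, hψ's.le⟩
        obtain ⟨ξ, hξ, hξ0⟩ := intermediate_value_Icc' hs.2.le hcs h0mem
        have hξab : ξ ∈ Set.Ioo a b := hsubI hξ
        have hξm : ξ ≠ m := ne_of_lt (lt_of_le_of_lt hξ.2 ht.2)
        exact hψ'ne ξ hξab hξm hξ0
      have hmono : ∀ s ∈ Set.Ioo a t, ψ t < ψ s := by
        intro s hs
        have hsubI : Set.Icc s t ⊆ Set.Ioo a b := Set.Icc_subset_Ioo hs.1 htab.2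
        obtain ⟨c, hc, hsl⟩ := exists_hasDerivAt_eq_slope ψ ψ' hs.2
          (fun x hx => (hd1 x (hsubI hx)).continuousAt.continuousWithinAt)
          (fun x hx => hd1 x (hsubI (Set.Ioo_subset_Icc_self hx)))
        have hc0 := hneg c ⟨lt_trans hs.1 hc.1, hc.2⟩
        have hts : (0:ℝ) < t - s := by linarith [hs.2]
        have hslope : ψ t - ψ s = ψ' c * (t - s) := by
          field_simp at hsl
          linarith
        nlinarith [mul_neg_of_neg_of_pos hc0 hts]
      have hev : ∀ᶠ s in 𝓝[>] a, ψ t ≤ ψ s := by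
        filter_upwards [Ioo_mem_nhdsGT ht.1] with s hs
        exact (hmono s hs).le
      have hle0 : ψ t ≤ 0 := ge_of_tendsto hTψa hev
      have := hpos t htab
      linarith
    -- ψ' < 0 on (m,b)
    have hsgn2 : ∀ t ∈ Set.Ioo m b, ψ' t < 0 := by
      intro t ht
      have htab : t ∈ Set.Ioo a b := ⟨hma.trans ht.1, ht.2⟩
      rcases lt_or_ge (ψ' t) 0 with h | h
      · exact h
      exfalso
      have hψ't : 0 < ψ' t := lt_of_le_of_ne h (Ne.symm (hψ'ne t htab (ne_of_gt ht.1)))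
      have hposn : ∀ s ∈ Set.Ioo t b, 0 < ψ' s := by
        intro s hs
        rcases lt_or_ge 0 (ψ' s) with h' | h'
        · exact h'
        exfalso
        have hsab : s ∈ Set.Ioo a b := ⟨hma.trans (ht.1.trans hs.1), hs.2⟩
        have hψ's : ψ' s < 0 := lt_of_le_of_ne h' (hψ'ne s hsab (ne_of_gt (ht.1.trans hs.1)))
        have hsubI : Set.Icc t s ⊆ Set.Ioo a b := Set.Icc_subset_Ioo htab.1 hs.2
        have hcs : ContinuousOn ψ' (Set.Icc t s) := fun x hx =>
          (hd2 x (hsubI hx)).continuousAt.continuousWithinAt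
        have h0mem : (0:ℝ) ∈ Set.Icc (ψ' s) (ψ' t) := ⟨hψ's.le, hψ't.le⟩
        obtain ⟨ξ, hξ, hξ0⟩ := intermediate_value_Icc' hs.1.le hcs h0mem
        have hξab : ξ ∈ Set.Ioo a b := hsubI hξ
        have hξm : ξ ≠ m := ne_of_gt (lt_of_lt_of_le ht.1 hξ.1)
        exact hψ'ne ξ hξab hξm hξ0
      have hmono : ∀ s ∈ Set.Ioo t b, ψ t < ψ s := by
        intro s hs
        have hsubI : Set.Icc t s ⊆ Set.Ioo a b := Set.Icc_subset_Ioo htab.1 hs.2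
        obtain ⟨c, hc, hsl⟩ := exists_hasDerivAt_eq_slope ψ ψ' hs.1
          (fun x hx => (hd1 x (hsubI hx)).continuousAt.continuousWithinAt)
          (fun x hx => hd1 x (hsubI (Set.Ioo_subset_Icc_self hx)))
        have hc0 := hposn c ⟨hc.1, hc.2.trans hs.2⟩
        have hts : (0:ℝ) < s - t := by linarith [hs.1]
        have hslope : ψ s - ψ t = ψ' c * (s - t) := by
          field_simp at hsl
          linarith
        nlinarith [mul_pos hc0 hts]
      have hev : ∀ᶠ s in 𝓝[<] b, ψ t ≤ ψ s := by
        filter_upwards [Ioo_mem_nhdsLT ht.2] with s hs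
        exact (hmono s hs).le
      have hle0 : ψ t ≤ 0 := ge_of_tendsto hTψb hev
      have := hpos t htab
      linarith
    -- the phase function φ = arcsin(ψ/R)
    set φ : ℝ → ℝ := fun θ => Real.arcsin (ψ θ / R) with hφdef
    have hφcm : ContinuousAt φ m := by
      have h1 : ContinuousAt ψ m := (hd1 m hm).continuousAt
      exact Real.continuous_arcsin.continuousAt.comp (h1.div_const R)
    have hφm : φ m = π/2 := by
      rw [hφdef]
      simp only
      rw [hψmR, div_self hR.ne', Real.arcsin_one]
    have hφderiv : ∀ t ∈ Set.Ioo a b, t ≠ m →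
        HasDerivAt φ (ψ' t / R * (1 / Real.sqrt (1 - (ψ t / R)^2))) t := by
      intro t htab htm
      have hψt := hpos t htab
      have hlt : ψ t < R := lt_of_le_of_ne (hψle t htab) (fun h => htm (huniq t htab h))
      have h0 : 0 < ψ t / R := div_pos hψt hR
      have hx1 : ψ t / R ≠ -1 := by intro h; rw [h] at h0; norm_num at h0
      have hx2 : ψ t / R ≠ 1 := ne_of_lt ((div_lt_one hR).2 hlt)
      have harc := Real.hasDerivAt_arcsin hx1 hx2
      have hdiv : HasDerivAt (fun x => ψ x / R) (ψ' t / R) t := (hd1 t htab).div_const R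
      have hcomp := harc.comp t hdiv
      exact hcomp.congr_deriv (by ring)
    have hsqrt : ∀ t ∈ Set.Ioo a b, t ≠ m →
        Real.sqrt (1 - (ψ t / R)^2) = |ψ' t| / (lam * R) := by
      intro t htab htm
      have hψt := hpos t htab
      have hA := hA0 t htab
      have hsq : 1 - (ψ t / R)^2 = (ψ' t / (lam * R))^2 := by
        rw [div_pow, div_pow, mul_pow, hR2]
        field_simp [hDpos.ne']
        linear_combination (-1) * hA
      rw [hsq, Real.sqrt_sq_eq_abs, abs_div, abs_of_pos (by positivity : (0:ℝ) < lam * R)]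
    -- φ has derivative λ on (a,m)
    have hφd1 : ∀ t ∈ Set.Ioo a m, HasDerivAt φ lam t := by
      intro t ht
      have htab : t ∈ Set.Ioo a b := ⟨ht.1, ht.2.trans hmb⟩
      have htm : t ≠ m := ne_of_lt ht.2
      have hψ't := hsgn1 t ht
      have h := hφderiv t htab htm
      rw [hsqrt t htab htm, abs_of_pos hψ't] at h
      convert h using 1
      field_simp
    have hφd2 : ∀ t ∈ Set.Ioo m b, HasDerivAt φ (-lam) t := by
      intro t ht
      have htab : t ∈ Set.Ioo a b := ⟨hma.trans ht.1, ht.2⟩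
      have htm : t ≠ m := ne_of_gt ht.1
      have hψ't := hsgn2 t ht
      have h := hφderiv t htab htm
      rw [hsqrt t htab htm, abs_of_neg hψ't] at h
      convert h using 1
      field_simp [hψ't.ne, hR.ne']
    -- on (a,m) : φ t = λ (t - a)
    have hφarc0 : Tendsto φ (𝓝[>] a) (𝓝 0) := by
      have h1 : Tendsto (fun θ => ψ θ / R) (𝓝[>] a) (𝓝 0) := by
        have := hTψa.div_const R
        simpa using this
      have h2 := (Real.continuous_arcsin.tendsto 0).comp h1
      simpa [Function.comp_def, Real.arcsin_zero] using h2
    have hval1 : ∀ t ∈ Set.Ioo a m, φ t = lam * (t - a) := by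
      intro t ht
      have hlin := deriv_linear_aux hφd1
      have h2 : Tendsto (fun s => φ t - lam * (t - s)) (𝓝[>] a) (𝓝 (φ t - lam * (t - a))) := by
        have hc : Continuous (fun s : ℝ => φ t - lam * (t - s)) := by fun_prop
        exact (hc.tendsto a).mono_left nhdsWithin_le_nhds
      have h3 : ∀ᶠ s in 𝓝[>] a, (fun s => φ t - lam * (t - s)) s = φ s := by
        filter_upwards [Ioo_mem_nhdsGT ht.1] with s hs
        have := hlin s ⟨hs.1, hs.2.trans ht.2⟩ t ht
        beta_reduce
        linarith
      have h4 : Tendsto φ (𝓝[>] a) (𝓝 (φ t - lam * (t - a))) := h2.congr' h3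
      have h5 := tendsto_nhds_unique h4 hφarc0
      linarith
    have hlim1 : lam * (m - a) = π/2 := by
      have h1 : Tendsto φ (𝓝[<] m) (𝓝 (π/2)) := by
        rw [← hφm]
        exact hφcm.tendsto.mono_left nhdsWithin_le_nhds
      have h2 : Tendsto (fun s : ℝ => lam * (s - a)) (𝓝[<] m) (𝓝 (lam * (m - a))) := by
        have hc : Continuous (fun s : ℝ => lam * (s - a)) := by fun_prop
        exact (hc.tendsto m).mono_left nhdsWithin_le_nhds
      have h3 : ∀ᶠ s in 𝓝[<] m, (fun s : ℝ => lam * (s - a)) s = φ s := by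
        filter_upwards [Ioo_mem_nhdsLT hma] with s hs
        exact (hval1 s hs).symm
      exact tendsto_nhds_unique (h2.congr' h3) h1
    -- on (m,b) : φ t = π/2 - λ (t - m)
    have hval2 : ∀ t ∈ Set.Ioo m b, φ t = π/2 - lam * (t - m) := by
      intro t ht
      have hlin := deriv_linear_aux hφd2
      have h1 : Tendsto φ (𝓝[>] m) (𝓝 (π/2)) := by
        rw [← hφm]
        exact hφcm.tendsto.mono_left nhdsWithin_le_nhds
      have h2 : Tendsto (fun s => φ t + lam * (t - s)) (𝓝[>] m) (𝓝 (φ t + lam * (t - m))) := by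
        have hc : Continuous (fun s : ℝ => φ t + lam * (t - s)) := by fun_prop
        exact (hc.tendsto m).mono_left nhdsWithin_le_nhds
      have h3 : ∀ᶠ s in 𝓝[>] m, (fun s => φ t + lam * (t - s)) s = φ s := by
        filter_upwards [Ioo_mem_nhdsGT ht.1] with s hs
        have := hlin s ⟨hs.1, hs.2.trans ht.2⟩ t ht
        beta_reduce
        linarith
      have h4 := tendsto_nhds_unique (h2.congr' h3) h1
      linarith
    have hlim2 : lam * (b - m) = π/2 := by
      have hφarcb : Tendsto φ (𝓝[<] b) (𝓝 0) := by
        have h1 : Tendsto (fun θ => ψ θ / R) (𝓝[<] b) (𝓝 0) := by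
          have := hTψb.div_const R
          simpa using this
        have h2 := (Real.continuous_arcsin.tendsto 0).comp h1
        simpa [Function.comp_def, Real.arcsin_zero] using h2
      have h2 : Tendsto (fun s : ℝ => π/2 - lam * (s - m)) (𝓝[<] b) (𝓝 (π/2 - lam * (b - m))) := by
        have hc : Continuous (fun s : ℝ => π/2 - lam * (s - m)) := by fun_prop
        exact (hc.tendsto b).mono_left nhdsWithin_le_nhds
      have h3 : ∀ᶠ s in 𝓝[<] b, (fun s : ℝ => π/2 - lam * (s - m)) s = φ s := by
        filter_upwards [Ioo_mem_nhdsLT hmb] with s hs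
        exact (hval2 s hs).symm
      have h4 := tendsto_nhds_unique (h2.congr' h3) hφarcb
      linarith
    -- conclusion : λ(b-a) = π  but  λ(b-a) < π
    have heq : lam * (b - a) = π := by linarith
    have hπ := Real.pi_pos
    nlinarith [mul_pos (show (0:ℝ) < 1/2 - lam by linarith) (show (0:ℝ) < b - a by linarith)]
  · -- κ > 0 : infinite energy near the left endpoint
    set u : ℝ → ℝ := fun θ => ψ θ ^ (1/lam) with hudef
    set u1 : ℝ → ℝ := fun θ => ψ' θ * (1/lam) * ψ θ ^ (1/lam - 1) with hu1def
    have hu1 : ∀ θ ∈ Set.Ioo a b, HasDerivAt u (u1 θ) θ :=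
      fun θ hθ => (hd1 θ hθ).rpow_const (Or.inl (hpos θ hθ).ne')
    have hu1sq : ∀ θ ∈ Set.Ioo a b, u1 θ^2 = (ψ θ ^ q * ψ' θ^2)/lam^2 := by
      intro θ hθ
      have hψθ := hpos θ hθ
      have hpp : (ψ θ ^ (1/lam - 1))^2 = ψ θ ^ q := by
        rw [sq, ← Real.rpow_add hψθ]
        congr 1
        field_simp
        linarith [hlq]
      rw [hu1def]
      simp only
      rw [mul_pow, mul_pow, hpp]
      field_simp
    have hev : ∀ᶠ θ in 𝓝[>] a, θ ∈ Set.Ioo a b ∧ ψ θ ^ q * ψ' θ^2 ∈ Set.Ioo (κ/2) (2*κ) := by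
      have h2 : ∀ᶠ θ in 𝓝[>] a, ψ θ ^ q * ψ' θ^2 ∈ Set.Ioo (κ/2) (2*κ) :=
        hTB (isOpen_Ioo.mem_nhds ⟨by linarith, by linarith⟩)
      filter_upwards [hmemIoo, h2] with θ hθ1 hθ2
      exact ⟨hθ1, hθ2⟩
    obtain ⟨t₁, ht₁a, hsub1⟩ := mem_nhdsGT_iff_exists_Ioc_subset.mp hev
    set t₂ : ℝ := min t₁ (min (a+1) ((a+b)/2)) with ht₂def
    have hat₂ : a < t₂ := lt_min ht₁a (lt_min (by linarith) (by linarith))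
    have ht₂1 : t₂ - a ≤ 1 := by
      have h1 := min_le_right t₁ (min (a+1) ((a+b)/2))
      have h2 := min_le_left (a+1) ((a+b)/2)
      rw [ht₂def]; linarith [le_trans h1 h2]
    have ht₂b : t₂ < b := by
      have h1 := min_le_right t₁ (min (a+1) ((a+b)/2))
      have h2 := min_le_right (a+1) ((a+b)/2)
      have := le_trans h1 h2
      linarith
    have hprop : ∀ θ ∈ Set.Ioc a t₂, θ ∈ Set.Ioo a b ∧ ψ θ ^ q * ψ' θ^2 ∈ Set.Ioo (κ/2) (2*κ) :=
      fun θ hθ => hsub1 (Set.Ioc_subset_Ioc_right (min_le_left _ _) hθ)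
    set M₁ : ℝ := Real.sqrt (2*κ) / lam with hM₁def
    have hM₁ : 0 < M₁ := div_pos (Real.sqrt_pos.2 (by linarith)) hlam0
    have hM₁sq : M₁^2 = 2*κ/lam^2 := by
      rw [hM₁def, div_pow, Real.sq_sqrt (by linarith : (0:ℝ) ≤ 2*κ)]
    have hu1le : ∀ θ ∈ Set.Ioc a t₂, u1 θ ≤ M₁ := by
      intro θ hθ
      obtain ⟨hθIoo, hB⟩ := hprop θ hθ
      have h := hu1sq θ hθIoo
      have hle : u1 θ^2 ≤ M₁^2 := by
        rw [h, hM₁sq]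
        have := hB.2.le
        gcongr
      nlinarith [hM₁]
    have hTu : Tendsto u (𝓝[>] a) (𝓝 0) := hrpow0 (1/lam) (by positivity) _ hTψa
    have hub : ∀ θ ∈ Set.Ioc a t₂, u θ ≤ M₁ * (θ - a) := by
      intro θ hθ
      have hθIoo := (hprop θ hθ).1
      have hev2 : ∀ᶠ s in 𝓝[>] a, u θ ≤ u s + M₁ * (θ - a) := by
        filter_upwards [Ioo_mem_nhdsGT hθ.1] with s hs
        have hst : s < θ := hs.2
        have hsubI : Set.Icc s θ ⊆ Set.Ioo a b := Set.Icc_subset_Ioo hs.1 hθIoo.2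
        obtain ⟨c, hcmem, hsl⟩ := exists_hasDerivAt_eq_slope u u1 hst
          (fun x hx => (hu1 x (hsubI hx)).continuousAt.continuousWithinAt)
          (fun x hx => hu1 x (hsubI (Set.Ioo_subset_Icc_self hx)))
        have hc2 : c ∈ Set.Ioc a t₂ := ⟨hs.1.trans hcmem.1, hcmem.2.le.trans hθ.2⟩
        have hcle := hu1le c hc2
        have hθs : (0:ℝ) < θ - s := by linarith
        have hslope : u θ - u s = u1 c * (θ - s) := by
          field_simp at hsl
          linarith
        have h1 : u1 c * (θ - s) ≤ M₁ * (θ - s) := mul_le_mul_of_nonneg_right hcle hθs.le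
        have h2 : M₁ * (θ - s) ≤ M₁ * (θ - a) := by
          apply mul_le_mul_of_nonneg_left _ hM₁.le
          linarith [hs.1]
        linarith
      have hTu2 : Tendsto (fun s => u s + M₁ * (θ - a)) (𝓝[>] a) (𝓝 (0 + M₁ * (θ - a))) :=
        hTu.add_const _
      have := ge_of_tendsto hTu2 hev2
      linarith
    set c₀ : ℝ := (κ/2) * M₁^(2*lam-2) with hc₀def
    have hc₀ : 0 < c₀ := mul_pos (by linarith) (Real.rpow_pos_of_pos hM₁ _)
    have hkey : ∀ θ ∈ Set.Ioc a t₂, c₀ * (θ - a)⁻¹ ≤ ψ' θ^2 := by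
      intro θ hθ
      obtain ⟨hθIoo, hB⟩ := hprop θ hθ
      have hψθ := hpos θ hθIoo
      have hθa : (0:ℝ) < θ - a := by linarith [hθ.1]
      have hu_pos : 0 < u θ := Real.rpow_pos_of_pos hψθ _
      have hub' := hub θ hθ
      have hexp : (1/lam)*(2-2*lam) = q := by
        field_simp
        linarith [hlq]
      have hψq : ψ θ ^ q = (u θ)^(2-2*lam) := by
        rw [← hexp, Real.rpow_mul hψθ.le]
      have h1 : ψ θ ^ q ≤ (M₁*(θ-a))^(2-2*lam) := by
        rw [hψq]
        exact Real.rpow_le_rpow hu_pos.le hub' (by linarith)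
      have hT_pos : (0:ℝ) < (M₁*(θ-a))^(2-2*lam) := Real.rpow_pos_of_pos (by positivity) _
      have h2 : (κ/2) / (M₁*(θ-a))^(2-2*lam) ≤ ψ' θ^2 := by
        rw [div_le_iff₀ hT_pos]
        calc κ/2 ≤ ψ θ^q * ψ' θ^2 := hB.1.le
          _ ≤ (M₁*(θ-a))^(2-2*lam) * ψ' θ^2 := mul_le_mul_of_nonneg_right h1 (sq_nonneg _)
          _ = ψ' θ^2 * (M₁*(θ-a))^(2-2*lam) := by ring
      have h3 : (κ/2) / (M₁*(θ-a))^(2-2*lam) = (κ/2) * (M₁^(2*lam-2) * (θ-a)^(2*lam-2)) := by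
        rw [Real.mul_rpow hM₁.le hθa.le]
        rw [show (2*lam-2 : ℝ) = -(2-2*lam) by ring, Real.rpow_neg hM₁.le, Real.rpow_neg hθa.le]
        field_simp
      have h4 : (θ-a)⁻¹ ≤ (θ-a)^(2*lam-2) := by
        have h5 := Real.rpow_le_rpow_of_exponent_ge hθa
          (by linarith [hθ.2, ht₂1] : θ - a ≤ 1) (by linarith : 2*lam-2 ≤ -1)
        rwa [Real.rpow_neg_one] at h5
      calc c₀*(θ-a)⁻¹ = (κ/2)*M₁^(2*lam-2)*(θ-a)⁻¹ := by rw [hc₀def]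
        _ ≤ (κ/2)*M₁^(2*lam-2)*(θ-a)^(2*lam-2) :=
            mul_le_mul_of_nonneg_left h4 (by positivity)
        _ = (κ/2) / (M₁*(θ-a))^(2-2*lam) := by rw [h3]; ring
        _ ≤ ψ' θ^2 := h2
    -- comparison with the non-integrable 1/(x-a)
    have hsubuIcc : Set.uIcc a t₂ ⊆ Set.uIcc a b := by
      apply Set.uIcc_subset_uIcc Set.left_mem_uIcc
      rw [Set.uIcc_of_le hab.le]
      exact ⟨hat₂.le, ht₂b.le⟩
    have hginteg : IntervalIntegrable (fun θ => c₀⁻¹ * ψ' θ^2) MeasureTheory.volume a t₂ :=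
      (hH1.mono_set hsubuIcc).const_mul c₀⁻¹
    have hfint : IntervalIntegrable (fun θ => (θ - a)⁻¹) MeasureTheory.volume a t₂ := by
      apply IntervalIntegrable.mono_fun hginteg
      · apply ContinuousOn.aestronglyMeasurable _ measurableSet_uIoc
        apply ContinuousOn.inv₀ ((continuous_id.sub continuous_const).continuousOn)
        intro x hx
        rw [Set.uIoc_of_le hat₂.le] at hx
        exact sub_ne_zero.mpr (ne_of_gt hx.1)
      · rw [Set.uIoc_of_le hat₂.le]
        filter_upwards [MeasureTheory.ae_restrict_mem measurableSet_Ioc] with x hx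
        have hk := hkey x hx
        have hxa : (0:ℝ) < x - a := by linarith [hx.1]
        rw [Real.norm_eq_abs, Real.norm_eq_abs, abs_of_pos (inv_pos.2 hxa),
          abs_of_nonneg (by positivity : (0:ℝ) ≤ c₀⁻¹ * ψ' x^2)]
        calc (x-a)⁻¹ = c₀⁻¹*(c₀*(x-a)⁻¹) := by
              rw [← mul_assoc, inv_mul_cancel₀ hc₀.ne', one_mul]
          _ ≤ c₀⁻¹*ψ' x^2 := mul_le_mul_of_nonneg_left hk (by positivity)
    have hnot : ¬ IntervalIntegrable (fun θ => (θ - a)⁻¹) MeasureTheory.volume a t₂ := by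
      rw [intervalIntegrable_sub_inv_iff]
      push_neg
      exact ⟨hat₂.ne, Set.left_mem_uIcc⟩
    exact hnot hfint
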